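/- arXiv:1710.07657 — 2 statements merged into one kernel-verified Lean document; each statement's English description precedes it below -/
import Mathlib

section
/- Let t_f > t₀, suppose the controllability Gramian W(t_f) is invertible, and let x_f ∈ ℝⁿ. For any continuous control u : [t₀, t_f] → ℝᵐ whose controlled trajectory x(t) = g(t) + ∫_{t₀}^{t} e^{A(t−τ)} B u(τ) dτ reaches x(t_f) = x_f, the energy is bounded below by the Gramian quadratic form: ∫_{t₀}^{t_f} ‖u(t)‖² dt ≥ (x_f − g(t_f))ᵀ W(t_f)⁻¹ (x_f − g(t_f)). That is, the Gramian-based control is the minimum-energy control. -/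
open Matrix MeasureTheory

lemma continuous_exp_smul' {k : ℕ} (A : Matrix (Fin k) (Fin k) ℝ) :
    Continuous fun t : ℝ => NormedSpace.exp (t • A) := by
  letI : NormedRing (Matrix (Fin k) (Fin k) ℝ) := Matrix.linftyOpNormedRing
  letI : NormedAlgebra ℝ (Matrix (Fin k) (Fin k) ℝ) := Matrix.linftyOpNormedAlgebra
  letI : NormedAlgebra ℚ (Matrix (Fin k) (Fin k) ℝ) := .restrictScalars ℚ ℝ _
  letI : CompleteSpace (Matrix (Fin k) (Fin k) ℝ) := FiniteDimensional.complete ℝ _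
  exact NormedSpace.exp_continuous.comp (continuous_id.smul continuous_const)

lemma dot_mulVec_self' {k l : ℕ} (M : Matrix (Fin k) (Fin l) ℝ) (c : Fin l → ℝ) :
    (M *ᵥ c) ⬝ᵥ (M *ᵥ c) = c ⬝ᵥ ((Mᵀ * M) *ᵥ c) := by
  rw [← Matrix.mulVec_mulVec]
  conv_rhs => rw [Matrix.dotProduct_mulVec, Matrix.vecMul_transpose]

attribute [local instance] Matrix.normedAddCommGroup Matrix.normedSpace

/-- If `t_f > t₀` and the controllability Gramian `W(t_f)` is invertible,
then for any continuous control `u` whose controlled trajectory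
`x(t) = g(t) + ∫_{t₀}^{t} e^{A(t−τ)} B u(τ) dτ` reaches `x(t_f) = x_f`, the energy is
bounded below by the Gramian quadratic form:
`∫_{t₀}^{t_f} ‖u(t)‖² dt ≥ (x_f − g(t_f))ᵀ W(t_f)⁻¹ (x_f − g(t_f))`. -/
theorem energy_lower_bound_gramian
    (n m : ℕ) (A : Matrix (Fin n) (Fin n) ℝ) (B : Matrix (Fin n) (Fin m) ℝ)
    (f x₀ : Fin n → ℝ) (t₀ : ℝ)
    (g : ℝ → Fin n → ℝ)
    (hg : ∀ t, g t = (NormedSpace.exp ((t - t₀) • A)).mulVec x₀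
        + ∫ τ in t₀..t, (NormedSpace.exp ((t - τ) • A)).mulVec f)
    (W : ℝ → Matrix (Fin n) (Fin n) ℝ)
    (hW : ∀ t, W t = ∫ τ in t₀..t,
        NormedSpace.exp ((t - τ) • A) * B * Bᵀ * NormedSpace.exp ((t - τ) • Aᵀ))
    (tf : ℝ) (htf : t₀ < tf)
    (hinv : IsUnit (W tf).det)
    (xf : Fin n → ℝ)
    (u : ℝ → Fin m → ℝ) (hu : Continuous u)
    (x : ℝ → Fin n → ℝ)
    (hx : ∀ t, x t = g t
        + ∫ τ in t₀..t, (NormedSpace.exp ((t - τ) • A)).mulVec (B.mulVec (u τ)))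
    (hreach : x tf = xf) :
    (∫ t in t₀..tf, ∑ k, (u t k) ^ 2)
      ≥ (xf - g tf) ⬝ᵥ (W tf)⁻¹.mulVec (xf - g tf) := by
  letI : CompleteSpace (Matrix (Fin n) (Fin n) ℝ) := FiniteDimensional.complete ℝ _
  set y : Fin n → ℝ := xf - g tf with hy_def
  set c : Fin n → ℝ := (W tf)⁻¹.mulVec y with hc_def
  set E : ℝ → Matrix (Fin n) (Fin n) ℝ := fun τ => NormedSpace.exp ((tf - τ) • A) with hE_def
  -- continuity facts
  have hEcont : Continuous E :=
    (continuous_exp_smul' A).comp (continuous_const.sub continuous_id)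
  have hETcont : Continuous fun τ : ℝ => NormedSpace.exp ((tf - τ) • Aᵀ) :=
    (continuous_exp_smul' Aᵀ).comp (continuous_const.sub continuous_id)
  -- the candidate optimal control
  set v : ℝ → Fin m → ℝ := fun τ => (Bᵀ * (E τ)ᵀ) *ᵥ c with hv_def
  have hvcont : Continuous v :=
    (continuous_const.matrix_mul hEcont.matrix_transpose).matrix_mulVec continuous_const
  set w : ℝ → Fin n → ℝ := fun τ => (E τ) *ᵥ (B *ᵥ u τ) with hw_def
  have hwcont : Continuous w :=
    hEcont.matrix_mulVec (continuous_const.matrix_mulVec hu)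
  -- the transpose of E
  have hET : ∀ τ : ℝ, (E τ)ᵀ = NormedSpace.exp ((tf - τ) • Aᵀ) := by
    intro τ
    rw [hE_def, ← Matrix.exp_transpose, Matrix.transpose_smul]
  -- the reached state identity
  have hy : (∫ τ in t₀..tf, w τ) = y := by
    have := hx tf
    rw [hreach] at this
    rw [hy_def, this]
    abel
  -- continuous linear maps for commuting with the integral
  let L1 : (Fin n → ℝ) →L[ℝ] ℝ := LinearMap.toContinuousLinearMap
    { toFun := fun z => c ⬝ᵥ z
      map_add' := fun a b => dotProduct_add c a b
      map_smul' := fun r a => by simp [dotProduct_smul] }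
  have hL1 : ∀ z, L1 z = c ⬝ᵥ z := fun z => rfl
  let L2 : Matrix (Fin n) (Fin n) ℝ →L[ℝ] ℝ := LinearMap.toContinuousLinearMap
    { toFun := fun M => c ⬝ᵥ (M *ᵥ c)
      map_add' := fun M N => by simp [Matrix.add_mulVec, dotProduct_add]
      map_smul' := fun r M => by simp [Matrix.smul_mulVec] }
  have hL2 : ∀ M, L2 M = c ⬝ᵥ (M *ᵥ c) := fun M => rfl
  -- first integral identity : ∫ ⟨u, v⟩ = c ⬝ᵥ y
  have huv_pt : ∀ τ : ℝ, u τ ⬝ᵥ v τ = L1 (w τ) := by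
    intro τ
    rw [hL1, hv_def]
    show u τ ⬝ᵥ ((Bᵀ * (E τ)ᵀ) *ᵥ c) = _
    rw [← Matrix.transpose_mul, Matrix.dotProduct_mulVec, Matrix.vecMul_transpose,
      ← Matrix.mulVec_mulVec, dotProduct_comm]
  have I1 : (∫ τ in t₀..tf, u τ ⬝ᵥ v τ) = c ⬝ᵥ y := by
    simp only [huv_pt]
    rw [L1.intervalIntegral_comp_comm (hwcont.intervalIntegrable _ _), hy]
    exact hL1 y
  -- the Gramian absorbs W⁻¹
  have hWy : (W tf) *ᵥ c = y := by
    rw [hc_def, Matrix.mulVec_mulVec, Matrix.mul_nonsing_inv _ hinv, Matrix.one_mulVec]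
  -- second integral identity : ∫ ⟨v, v⟩ = c ⬝ᵥ y
  have hvv_pt : ∀ τ : ℝ, (∑ k, v τ k ^ 2)
      = L2 (E τ * B * Bᵀ * NormedSpace.exp ((tf - τ) • Aᵀ)) := by
    intro τ
    have h1 : (∑ k, v τ k ^ 2) = v τ ⬝ᵥ v τ := by
      simp [dotProduct, sq]
    rw [h1, hL2, hv_def]
    show ((Bᵀ * (E τ)ᵀ) *ᵥ c) ⬝ᵥ ((Bᵀ * (E τ)ᵀ) *ᵥ c) = _
    rw [dot_mulVec_self', Matrix.transpose_mul, Matrix.transpose_transpose,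
      Matrix.transpose_transpose, hET τ]
    ring_nf
    rw [Matrix.mul_assoc, Matrix.mul_assoc, Matrix.mul_assoc]
  have hGcont : Continuous fun τ : ℝ =>
      E τ * B * Bᵀ * NormedSpace.exp ((tf - τ) • Aᵀ) :=
    ((hEcont.matrix_mul continuous_const).matrix_mul continuous_const).matrix_mul hETcont
  have I2 : (∫ τ in t₀..tf, ∑ k, v τ k ^ 2) = c ⬝ᵥ y := by
    simp only [hvv_pt]
    refine (L2.intervalIntegral_comp_comm (hGcont.intervalIntegrable _ _)).trans ?_
    rw [← hW tf]
    exact (hL2 (W tf)).trans (by rw [hWy])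
  -- pointwise inequality
  have hpt : ∀ t : ℝ, 2 * (u t ⬝ᵥ v t) - (∑ k, v t k ^ 2) ≤ ∑ k, u t k ^ 2 := by
    intro t
    have h0 : (0 : ℝ) ≤ ∑ k, (u t k - v t k) ^ 2 :=
      Finset.sum_nonneg fun k _ => sq_nonneg _
    have hexp : (∑ k, (u t k - v t k) ^ 2)
        = (∑ k, u t k ^ 2) - 2 * (u t ⬝ᵥ v t) + ∑ k, v t k ^ 2 := by
      simp only [dotProduct, Finset.mul_sum]
      rw [← Finset.sum_sub_distrib, ← Finset.sum_add_distrib]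
      exact Finset.sum_congr rfl fun k _ => by ring
    linarith [hexp ▸ h0]
  -- integrability of the scalar integrands
  have hu2int : IntervalIntegrable (fun t => ∑ k, u t k ^ 2) volume t₀ tf :=
    (continuous_finset_sum _ fun k _ => ((continuous_apply k).comp hu).pow 2).intervalIntegrable _ _
  have huvcont : Continuous fun t => u t ⬝ᵥ v t := hu.dotProduct hvcont
  have hv2cont : Continuous fun t => ∑ k, v t k ^ 2 :=
    continuous_finset_sum _ fun k _ => ((continuous_apply k).comp hvcont).pow 2
  have hlhsint : IntervalIntegrable (fun t => 2 * (u t ⬝ᵥ v t) - ∑ k, v t k ^ 2) volume t₀ tf :=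
    ((continuous_const.mul huvcont).sub hv2cont).intervalIntegrable _ _
  -- integral inequality
  have hmono : (∫ t in t₀..tf, 2 * (u t ⬝ᵥ v t) - ∑ k, v t k ^ 2)
      ≤ ∫ t in t₀..tf, ∑ k, u t k ^ 2 :=
    intervalIntegral.integral_mono_on htf.le hlhsint hu2int fun t _ => hpt t
  have hcompute : (∫ t in t₀..tf, 2 * (u t ⬝ᵥ v t) - ∑ k, v t k ^ 2) = c ⬝ᵥ y := by
    rw [intervalIntegral.integral_sub (f := fun t => 2 * (u t ⬝ᵥ v t)) ((continuous_const.mul huvcont).intervalIntegrable _ _)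
      (hv2cont.intervalIntegrable _ _), intervalIntegral.integral_const_mul, I1, I2]
    ring
  have : y ⬝ᵥ (W tf)⁻¹ *ᵥ y = c ⬝ᵥ y := by
    rw [hc_def, dotProduct_comm]
  rw [ge_iff_le, this, ← hcompute]
  exact hmono
end

section
/- Let t_f > t₀ and suppose the controllability Gramian W(t) is invertible for some (equivalently, by monotonicity of the Gramian quadratic form, every) t ∈ (t₀, t_f]. Then for the minimum-energy control u*(t) = Bᵀ e^{Aᵀ(t_f−t)} W(t_f)⁻¹ (x_f − g(t_f)) steering x₀ to x_f, the energy restricted to the subinterval [t₀, t], namely ∫_{t₀}^{t} ‖u*(s)‖² ds, equals (x_f − g(t_f))ᵀ W(t_f)⁻¹ e^{A(t_f−t)} W(t) e^{Aᵀ(t_f−t)} W(t_f)⁻¹ (x_f − g(t_f)); equivalently, with η = W(t_f)⁻¹(x_f − g(t_f)), the partial state displacement satisfies x(t) − g(t) = W(t) e^{Aᵀ(t_f−t)} η. -/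
open Matrix MeasureTheory
attribute [local instance] Matrix.normedAddCommGroup Matrix.normedSpace

lemma exp_smul_cont {n : ℕ} (A : Matrix (Fin n) (Fin n) ℝ) :
    Continuous fun s : ℝ => NormedSpace.exp (s • A) := by
  letI : SeminormedRing (Matrix (Fin n) (Fin n) ℝ) := Matrix.linftyOpSemiNormedRing
  letI : NormedRing (Matrix (Fin n) (Fin n) ℝ) := Matrix.linftyOpNormedRing
  letI : NormedAlgebra ℝ (Matrix (Fin n) (Fin n) ℝ) := Matrix.linftyOpNormedAlgebra
  letI : NormedAlgebra ℚ (Matrix (Fin n) (Fin n) ℝ) := NormedAlgebra.restrictScalars ℚ ℝ _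
  haveI : @CompleteSpace (Matrix (Fin n) (Fin n) ℝ) (@PseudoMetricSpace.toUniformSpace _
      (@SeminormedRing.toPseudoMetricSpace _ Matrix.linftyOpSemiNormedRing)) := by
    exact (inferInstance : CompleteSpace (Fin n → Fin n → ℝ))
  exact NormedSpace.exp_continuous.comp (continuous_id.smul continuous_const)

noncomputable def mvCLM (n : ℕ) (w : Fin n → ℝ) :
    Matrix (Fin n) (Fin n) ℝ →L[ℝ] (Fin n → ℝ) :=
  LinearMap.toContinuousLinearMap
    { toFun := fun M => M.mulVec w
      map_add' := fun M N => Matrix.add_mulVec M N w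
      map_smul' := fun c M => Matrix.smul_mulVec c M w }

@[simp] lemma mvCLM_apply {n : ℕ} (w : Fin n → ℝ) (M : Matrix (Fin n) (Fin n) ℝ) :
    mvCLM n w M = M.mulVec w := rfl

noncomputable def trCLM (n : ℕ) :
    Matrix (Fin n) (Fin n) ℝ →L[ℝ] Matrix (Fin n) (Fin n) ℝ :=
  LinearMap.toContinuousLinearMap
    { toFun := fun M => Mᵀ
      map_add' := fun M N => Matrix.transpose_add M N
      map_smul' := fun c M => Matrix.transpose_smul c M }

@[simp] lemma trCLM_apply {n : ℕ} (M : Matrix (Fin n) (Fin n) ℝ) :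
    trCLM n M = Mᵀ := rfl

noncomputable def quadCLM (n : ℕ) (P Q : Matrix (Fin n) (Fin n) ℝ) (v : Fin n → ℝ) :
    Matrix (Fin n) (Fin n) ℝ →L[ℝ] ℝ :=
  LinearMap.toContinuousLinearMap
    { toFun := fun M => v ⬝ᵥ (P * M * Q).mulVec v
      map_add' := fun M N => by
        simp [Matrix.mul_add, Matrix.add_mul, Matrix.add_mulVec, dotProduct_add]
      map_smul' := fun c M => by
        simp [Matrix.mul_smul, Matrix.smul_mul, Matrix.smul_mulVec,
          dotProduct_smul] }

@[simp] lemma quadCLM_apply {n : ℕ} (P Q : Matrix (Fin n) (Fin n) ℝ) (v : Fin n → ℝ)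
    (M : Matrix (Fin n) (Fin n) ℝ) :
    quadCLM n P Q v M = v ⬝ᵥ (P * M * Q).mulVec v := rfl

lemma exp_smul_add {n : ℕ} (A : Matrix (Fin n) (Fin n) ℝ) (a b : ℝ) :
    NormedSpace.exp ((a + b) • A)
      = NormedSpace.exp (a • A) * NormedSpace.exp (b • A) := by
  rw [add_smul]
  exact Matrix.exp_add_of_commute _ _ (((Commute.refl A).smul_left a).smul_right b)

lemma exp_smul_transpose {n : ℕ} (A : Matrix (Fin n) (Fin n) ℝ) (a : ℝ) :
    NormedSpace.exp (a • Aᵀ) = (NormedSpace.exp (a • A))ᵀ := by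
  rw [← Matrix.transpose_smul, Matrix.exp_transpose]

lemma dot_self_eq {n m : ℕ} (N : Matrix (Fin m) (Fin n) ℝ) (v : Fin n → ℝ) :
    (N.mulVec v) ⬝ᵥ (N.mulVec v) = v ⬝ᵥ (Nᵀ * N).mulVec v := by
  rw [Matrix.dotProduct_mulVec, Matrix.dotProduct_mulVec, ← Matrix.vecMul_vecMul,
    Matrix.vecMul_transpose]

/-- Let `t_f > t₀` and suppose the controllability Gramian `W(t)` is
invertible for every `t ∈ (t₀, t_f]`. For the minimum-energy control
`u*(t) = Bᵀ e^{Aᵀ(t_f−t)} W(t_f)⁻¹ (x_f − g(t_f))` steering `x₀` to `x_f`, the energy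
restricted to `[t₀, t]`, namely `∫_{t₀}^{t} ‖u*(s)‖² ds`, equals
`(x_f − g(t_f))ᵀ W(t_f)⁻¹ e^{A(t_f−t)} W(t) e^{Aᵀ(t_f−t)} W(t_f)⁻¹ (x_f − g(t_f))`;
equivalently, with `η = W(t_f)⁻¹ (x_f − g(t_f))`, the partial state displacement satisfies
`x(t) − g(t) = W(t) e^{Aᵀ(t_f−t)} η`. -/
theorem partial_energy_and_partial_displacement
    (n m : ℕ) (A : Matrix (Fin n) (Fin n) ℝ) (B : Matrix (Fin n) (Fin m) ℝ)
    (f x₀ : Fin n → ℝ) (t₀ : ℝ)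
    (g : ℝ → Fin n → ℝ)
    (hg : ∀ t, g t = (NormedSpace.exp ((t - t₀) • A)).mulVec x₀
        + ∫ τ in t₀..t, (NormedSpace.exp ((t - τ) • A)).mulVec f)
    (W : ℝ → Matrix (Fin n) (Fin n) ℝ)
    (hW : ∀ t, W t = ∫ τ in t₀..t,
        NormedSpace.exp ((t - τ) • A) * B * Bᵀ * NormedSpace.exp ((t - τ) • Aᵀ))
    (tf : ℝ) (htf : t₀ < tf)
    (hinv : ∀ t ∈ Set.Ioc t₀ tf, IsUnit (W t).det)
    (xf : Fin n → ℝ)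
    (η : Fin n → ℝ) (hη : η = (W tf)⁻¹.mulVec (xf - g tf))
    (ustar : ℝ → Fin m → ℝ)
    (hustar : ∀ t, ustar t = Bᵀ.mulVec ((NormedSpace.exp ((tf - t) • Aᵀ)).mulVec
        ((W tf)⁻¹.mulVec (xf - g tf))))
    (x : ℝ → Fin n → ℝ)
    (hx : ∀ t, x t = g t
        + ∫ τ in t₀..t, (NormedSpace.exp ((t - τ) • A)).mulVec (B.mulVec (ustar τ))) :
    ∀ t ∈ Set.Ioc t₀ tf,
      (∫ s in t₀..t, ∑ k, (ustar s k) ^ 2)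
        = (xf - g tf) ⬝ᵥ ((W tf)⁻¹ * NormedSpace.exp ((tf - t) • A) * W t
            * NormedSpace.exp ((tf - t) • Aᵀ) * (W tf)⁻¹).mulVec (xf - g tf) ∧
      x t - g t = (W t).mulVec ((NormedSpace.exp ((tf - t) • Aᵀ)).mulVec η) := by
  intro t _
  set ξ : Fin n → ℝ := xf - g tf with hξ
  set v : Fin n → ℝ := (W tf)⁻¹.mulVec ξ with hv
  set P : Matrix (Fin n) (Fin n) ℝ := NormedSpace.exp ((tf - t) • A) with hP
  set Q : Matrix (Fin n) (Fin n) ℝ := NormedSpace.exp ((tf - t) • Aᵀ) with hQ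
  set E : ℝ → Matrix (Fin n) (Fin n) ℝ := fun τ =>
    NormedSpace.exp ((t - τ) • A) * B * Bᵀ * NormedSpace.exp ((t - τ) • Aᵀ) with hE
  -- continuity / integrability
  have hcA : ∀ (c : ℝ) (M : Matrix (Fin n) (Fin n) ℝ),
      Continuous fun τ : ℝ => NormedSpace.exp ((c - τ) • M) :=
    fun c M => (exp_smul_cont M).comp (continuous_const.sub continuous_id)
  have hEcont : Continuous E := by
    exact (((hcA t A).matrix_mul continuous_const).matrix_mul continuous_const).matrix_mul
      (hcA t Aᵀ)
  have hEint := @Continuous.intervalIntegrable _ _ volume _ E hEcont t₀ t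
  have hWt : W t = ∫ τ in t₀..t, E τ := hW t
  -- symmetry of W
  have hWsymm : ∀ s : ℝ, (W s)ᵀ = W s := by
    intro s
    have hint := @Continuous.intervalIntegrable _ _ volume _ (fun τ => NormedSpace.exp ((s - τ) • A) * B * Bᵀ
        * NormedSpace.exp ((s - τ) • Aᵀ))
      ((((hcA s A).matrix_mul continuous_const).matrix_mul continuous_const).matrix_mul
        (hcA s Aᵀ)) t₀ s
    rw [hW s]
    have := ((trCLM n).intervalIntegral_comp_comm hint).symm
    change (∫ τ in t₀..s, _)ᵀ = ∫ τ in t₀..s, (_ : Matrix (Fin n) (Fin n) ℝ)ᵀ at this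
    rw [this]
    refine intervalIntegral.integral_congr fun τ _ => ?_
    simp [Matrix.transpose_mul, exp_smul_transpose, Matrix.transpose_transpose,
      Matrix.mul_assoc]
  -- exponential splitting
  have hsplitA : ∀ s : ℝ, NormedSpace.exp ((tf - s) • A)
      = P * NormedSpace.exp ((t - s) • A) := by
    intro s
    rw [hP, ← exp_smul_add, show tf - t + (t - s) = tf - s from by ring]
  have hsplitAT : ∀ s : ℝ, NormedSpace.exp ((tf - s) • Aᵀ)
      = NormedSpace.exp ((t - s) • Aᵀ) * Q := by
    intro s
    rw [hQ, ← exp_smul_add, show t - s + (tf - t) = tf - s from by ring]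
  -- the inverse transfers through dot products
  have hkey : ξ ᵥ* (W tf)⁻¹ = v := by
    conv_lhs => rw [show (W tf)⁻¹ = ((W tf)⁻¹)ᵀ by
      rw [Matrix.transpose_nonsing_inv, hWsymm tf]]
    rw [Matrix.vecMul_transpose, hv]
  have hdotinv : ∀ y : Fin n → ℝ, ξ ⬝ᵥ (W tf)⁻¹.mulVec y = v ⬝ᵥ y := by
    intro y
    rw [Matrix.dotProduct_mulVec, hkey]
  constructor
  · -- energy identity
    have hstep : ∀ s : ℝ, (∑ k, (ustar s k) ^ 2) = quadCLM n P Q v (E s) := by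
      intro s
      have h1 : (∑ k, (ustar s k) ^ 2) = (ustar s) ⬝ᵥ (ustar s) := by
        simp [dotProduct, sq]
      have h2 : ustar s = (Bᵀ * NormedSpace.exp ((tf - s) • Aᵀ)).mulVec v := by
        rw [hustar s, Matrix.mulVec_mulVec]
      have hN : (Bᵀ * NormedSpace.exp ((tf - s) • Aᵀ))ᵀ
          * (Bᵀ * NormedSpace.exp ((tf - s) • Aᵀ)) = P * E s * Q := by
        rw [Matrix.transpose_mul, Matrix.transpose_transpose, ← Matrix.exp_transpose,
          Matrix.transpose_smul, Matrix.transpose_transpose, hsplitA s, hsplitAT s]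
        simp only [hE]
        simp only [Matrix.mul_assoc]
      rw [h1, h2, dot_self_eq, quadCLM_apply, hN]
    calc (∫ s in t₀..t, ∑ k, (ustar s k) ^ 2)
        = ∫ s in t₀..t, quadCLM n P Q v (E s) :=
          intervalIntegral.integral_congr fun s _ => hstep s
      _ = quadCLM n P Q v (∫ s in t₀..t, E s) :=
          (quadCLM n P Q v).intervalIntegral_comp_comm hEint
      _ = v ⬝ᵥ (P * W t * Q).mulVec v := by rw [← hWt, quadCLM_apply]
      _ = ξ ⬝ᵥ ((W tf)⁻¹ * P * W t * Q * (W tf)⁻¹).mulVec ξ := by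
          conv_rhs => rw [show (W tf)⁻¹ * P * W t * Q * (W tf)⁻¹
              = (W tf)⁻¹ * (P * W t * Q * (W tf)⁻¹) from by simp only [Matrix.mul_assoc],
            ← Matrix.mulVec_mulVec]
          rw [hdotinv]
          congr 1
          conv_rhs => rw [← Matrix.mulVec_mulVec]
  · -- displacement identity
    have hxt : x t - g t
        = ∫ τ in t₀..t, (NormedSpace.exp ((t - τ) • A)).mulVec (B.mulVec (ustar τ)) := by
      rw [hx t, add_sub_cancel_left]
    have hstep : ∀ τ : ℝ,
        (NormedSpace.exp ((t - τ) • A)).mulVec (B.mulVec (ustar τ))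
          = mvCLM n (Q.mulVec v) (E τ) := by
      intro τ
      rw [hustar τ, hsplitAT τ, mvCLM_apply]
      simp only [hE]
      simp only [← Matrix.mulVec_mulVec]
    rw [hxt, hη]
    calc (∫ τ in t₀..t, (NormedSpace.exp ((t - τ) • A)).mulVec (B.mulVec (ustar τ)))
        = ∫ τ in t₀..t, mvCLM n (Q.mulVec v) (E τ) :=
          intervalIntegral.integral_congr fun τ _ => hstep τ
      _ = mvCLM n (Q.mulVec v) (∫ τ in t₀..t, E τ) :=
          (mvCLM n (Q.mulVec v)).intervalIntegral_comp_comm hEint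
      _ = (W t).mulVec (Q.mulVec v) := by rw [← hWt, mvCLM_apply]
end
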